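/- If X and Y are homotopy equivalent topological spaces, then X is a Dold space if and only if Y is a Dold space. -/

import Mathlib

open unitInterval

universe u v w

/-- A partition of unity: continuous `[0,1]`-valued maps whose pointwise sum is `1`. -/
def IsPartitionOfUnity {ι : Type*} {X : Type*} [TopologicalSpace X]
    (f : ι → X → ℝ) : Prop :=
  (∀ i, Continuous (f i)) ∧ (∀ i x, f i x ∈ Set.Icc (0 : ℝ) 1) ∧
    ∀ x, HasSum (fun i => f i x) 1

/-- A cover is numerable if it admits a subordinate partition of unity with
locally finite supports. -/
def IsNumerableCover {ι : Type*} {X : Type*} [TopologicalSpace X]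
    (U : ι → Set X) : Prop :=
  ∃ f : ι → X → ℝ, IsPartitionOfUnity f ∧
    LocallyFinite (fun i => closure (Function.support (f i))) ∧
    ∀ i, closure (Function.support (f i)) ⊆ U i

/-- `U` is ambiently contractible to `x₀`: the inclusion `U → X` is homotopic to the
constant map at `x₀`. -/
def AmbientlyContractibleTo {X : Type*} [TopologicalSpace X] (U : Set X) (x₀ : X) : Prop :=
  ContinuousMap.Homotopic
    (⟨Subtype.val, continuous_subtype_val⟩ : C(U, X))
    (ContinuousMap.const ↥U x₀)

/-- `U ⊆ X` is ambiently contractible: the inclusion `U → X` is nullhomotopic. -/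
def AmbientlyContractible {X : Type*} [TopologicalSpace X] (U : Set X) : Prop :=
  ∃ x₀ : X, AmbientlyContractibleTo U x₀

/-- A Dold space (numerably contractible space): a space admitting a numerable cover
by ambiently contractible subsets. -/
def IsDoldSpace (X : Type u) [TopologicalSpace X] : Prop :=
  ∃ (ι : Type u) (U : ι → Set X),
    (∀ x, ∃ i, x ∈ U i) ∧ IsNumerableCover U ∧ ∀ i, AmbientlyContractible (U i)

/-- Reindexing lemma: a numerable cover by ambiently contractible sets with an
index type in an arbitrary universe yields a Dold space structure. -/
lemma isDoldSpace_of_cover {X : Type u} [TopologicalSpace X] {ι : Type w}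
    (U : ι → Set X) (hN : IsNumerableCover U)
    (hC : ∀ i, AmbientlyContractible (U i)) : IsDoldSpace X := by
  by_cases hX : Nonempty X
  case neg =>
    -- X is empty: everything is vacuous with index type X itself
    rw [not_nonempty_iff] at hX
    exact ⟨X, fun _ => ∅, fun x => isEmptyElim x,
      ⟨fun _ _ => 0, ⟨fun i => isEmptyElim i, fun i => isEmptyElim i,
        fun x => isEmptyElim x⟩, fun x => isEmptyElim x, fun i => isEmptyElim i⟩,
      fun i => isEmptyElim i⟩
  obtain ⟨f, ⟨hcont, hmem, hsum⟩, hlf, hsub⟩ := hN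
  haveI : Nonempty ι := by
    by_contra hι
    rw [not_nonempty_iff] at hι
    obtain ⟨x⟩ := hX
    have h0 : HasSum (fun i => f i x) 0 := by
      have he : (fun i => f i x) = fun _ => 0 := funext fun i => isEmptyElim i
      rw [he]; exact hasSum_zero
    exact one_ne_zero ((hsum x).unique h0)
  classical
  -- reindex by X → ℝ
  set n : (X → ℝ) → ℕ := fun g => Nat.card {i // f i = g} with hn
  set f' : (X → ℝ) → X → ℝ := fun g x => (n g : ℝ) * g x with hf'
  -- fibers of a nonzero g are finite
  have hfin : ∀ g : X → ℝ, g ≠ 0 → Finite {i // f i = g} := by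
    intro g hg
    by_contra hinf
    rw [not_finite_iff_infinite] at hinf
    obtain ⟨x, hx⟩ : ∃ x, g x ≠ 0 := by
      by_contra hc; push_neg at hc; exact hg (funext hc)
    have hsummable : Summable fun i => f i x := (hsum x).summable
    have htend := hsummable.tendsto_cofinite_zero
    have hev : ∀ᶠ i in Filter.cofinite, f i x ∈ Metric.ball (0:ℝ) |g x| :=
      htend.eventually (Filter.eventually_of_mem
        (Metric.ball_mem_nhds (0 : ℝ) (abs_pos.mpr hx)) (fun y hy => hy))
    have hfinset : {i | f i x ∉ Metric.ball (0:ℝ) |g x|}.Finite :=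
      Filter.eventually_cofinite.mp hev
    have hinf' : {i | f i = g}.Infinite := Set.infinite_coe_iff.mp hinf
    have hsub2 : {i | f i = g} ⊆ {i | f i x ∉ Metric.ball (0:ℝ) |g x|} := by
      intro i hi; simp only [Set.mem_setOf_eq] at hi ⊢
      rw [hi]
      simp [Real.dist_eq]
    exact hinf' (hfinset.subset hsub2)
  -- fiber sums
  have hfibsum : ∀ (g : X → ℝ) (x : X),
      HasSum (fun c : {i // f i = g} => f c.1 x) ((n g : ℝ) * g x) := by
    intro g x
    by_cases hg : g = 0
    · subst hg
      have : (fun c : {i // f i = (0 : X → ℝ)} => f c.1 x) = fun _ => 0 := by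
        funext c; rw [c.2]; rfl
      rw [this]
      simpa using hasSum_zero
    · haveI := hfin g hg
      haveI : Fintype {i // f i = g} := Fintype.ofFinite _
      have := hasSum_fintype (fun c : {i // f i = g} => f c.1 x)
      convert this using 1
      rw [hn]
      simp only [Nat.card_eq_fintype_card]
      have : ∀ c : {i // f i = g}, f c.1 x = g x := fun c => by rw [c.2]
      rw [Finset.sum_congr rfl (fun c _ => this c), Finset.sum_const, Finset.card_univ]
      simp [mul_comm]
  -- total sum
  have hsum' : ∀ x, HasSum (fun g => f' g x) 1 := by
    intro x
    have h1 : HasSum (fun p : Σ g : X → ℝ, {i // f i = g} => f p.2.1 x) 1 := by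
      have := (Equiv.sigmaFiberEquiv f).hasSum_iff (f := fun i => f i x) (a := 1)
      exact this.mpr (hsum x)
    exact h1.sigma (fun g => hfibsum g x)
  -- nonnegativity
  have hnonneg : ∀ g x, 0 ≤ f' g x := by
    intro g x
    by_cases hg : ∃ i, f i = g
    · obtain ⟨i, hi⟩ := hg
      have : 0 ≤ g x := by rw [← hi]; exact (hmem i x).1
      positivity
    · have : n g = 0 := by
        rw [hn, Nat.card_eq_zero]
        left
        rw [isEmpty_subtype]
        push_neg at hg; exact hg
      simp [hf', this]
  -- supports
  have hsupp : ∀ g : X → ℝ, Function.support (f' g) ⊆ Function.support g := by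
    intro g x hx
    simp only [hf', Function.mem_support] at hx ⊢
    intro h0; exact hx (by rw [h0, mul_zero])
  set U' : (X → ℝ) → Set X := fun g =>
    if h : ∃ i, f i = g then U h.choose else U (Classical.arbitrary ι) with hU'
  have hsubord : ∀ g, closure (Function.support (f' g)) ⊆ U' g := by
    intro g
    by_cases hg : ∃ i, f i = g
    · have h1 : Function.support (f' g) ⊆ Function.support (f hg.choose) := by
        rw [hg.choose_spec]; exact hsupp g
      rw [hU']; simp only [hg, dif_pos]
      exact (closure_mono h1).trans (hsub hg.choose)
    · have : n g = 0 := by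
        rw [hn, Nat.card_eq_zero]; left; rw [isEmpty_subtype]; push_neg at hg; exact hg
      have h0 : f' g = 0 := by funext x; simp [hf', this]
      rw [h0]
      simp only [Function.support_zero, closure_empty]
      exact Set.empty_subset _
  refine ⟨X → ℝ, U', ?_, ⟨f', ⟨?_, ?_, hsum'⟩, ?_, hsubord⟩, ?_⟩
  · -- covering
    intro x
    have : ∃ g, f' g x ≠ 0 := by
      by_contra hc; push_neg at hc
      have h0 : HasSum (fun g => f' g x) 0 := by
        convert hasSum_zero with g; exact hc g
      exact one_ne_zero ((hsum' x).unique h0)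
    obtain ⟨g, hg⟩ := this
    exact ⟨g, hsubord g (subset_closure hg)⟩
  · -- continuity
    intro g
    by_cases hg : ∃ i, f i = g
    · obtain ⟨i, hi⟩ := hg
      have : Continuous g := hi ▸ hcont i
      exact continuous_const.mul this
    · have hz : n g = 0 := by
        rw [hn, Nat.card_eq_zero]; left; rw [isEmpty_subtype]; push_neg at hg; exact hg
      have : f' g = fun _ => 0 := by funext y; simp [hf', hz]
      rw [this]; exact continuous_const
  · -- membership in Icc
    intro g x
    refine ⟨hnonneg g x, ?_⟩
    exact le_hasSum (hsum' x) g (fun j _ => hnonneg j x)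
  · -- local finiteness
    intro x
    obtain ⟨N, hN, hfinN⟩ := hlf x
    refine ⟨N, hN, ?_⟩
    have hkey : ∀ g ∈ {g | (closure (Function.support (f' g)) ∩ N).Nonempty}, ∃ i, f i = g := by
      intro g hg
      by_contra hc
      have : n g = 0 := by
        rw [hn, Nat.card_eq_zero]; left; rw [isEmpty_subtype]; push_neg at hc; exact hc
      have h0 : f' g = 0 := by funext y; simp [hf', this]
      obtain ⟨y, hy, _⟩ := hg
      rw [h0] at hy
      simp [Function.support_zero] at hy
    set m : (X → ℝ) → ι := fun g => if h : ∃ i, f i = g then h.choose else Classical.arbitrary ι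
    apply Set.Finite.of_finite_image (f := m)
    · apply hfinN.subset
      rintro i ⟨g, hg, rfl⟩
      obtain ⟨hex⟩ := (⟨hkey g hg⟩ : Nonempty (∃ i, f i = g))
      have hm : m g = (hkey g hg).choose := by simp [m, hkey g hg]
      have hfm : f (m g) = g := by rw [hm]; exact (hkey g hg).choose_spec
      obtain ⟨y, hy1, hy2⟩ := hg
      refine ⟨y, ?_, hy2⟩
      have : closure (Function.support (f' g)) ⊆ closure (Function.support (f (m g))) := by
        rw [hfm]; exact closure_mono (hsupp g)
      exact this hy1
    · intro g1 h1 g2 h2 heq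
      have hf1 : f (m g1) = g1 := by
        simp only [m, hkey g1 h1, dif_pos]; exact (hkey g1 h1).choose_spec
      have hf2 : f (m g2) = g2 := by
        simp only [m, hkey g2 h2, dif_pos]; exact (hkey g2 h2).choose_spec
      rw [← hf1, ← hf2, heq]
  · -- contractibility
    intro g
    rw [hU']
    by_cases hg : ∃ i, f i = g
    · simp only [hg, dif_pos]; exact hC _
    · simp only [hg, dif_neg, not_false_iff]; exact hC _

/-- Transfer lemma. -/
lemma isDoldSpace_transfer {X : Type u} {Y : Type v} [TopologicalSpace X] [TopologicalSpace Y]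
    (F : C(X, Y)) (G : C(Y, X)) (H : (G.comp F).Homotopic (ContinuousMap.id X))
    (hY : IsDoldSpace Y) : IsDoldSpace X := by
  obtain ⟨ι, U, _, ⟨p, ⟨hpc, hpm, hps⟩, hplf, hpsub⟩, hUc⟩ := hY
  set V : ι → Set X := fun i => F ⁻¹' (U i) with hV
  set q : ι → X → ℝ := fun i x => p i (F x) with hq
  have hqsub : ∀ i, closure (Function.support (q i)) ⊆ V i := by
    intro i
    have h1 : Function.support (q i) ⊆ F ⁻¹' closure (Function.support (p i)) := by
      intro x hx
      exact subset_closure (by simpa [hq, Function.mem_support] using hx)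
    have h2 : IsClosed (F ⁻¹' closure (Function.support (p i))) :=
      (isClosed_closure).preimage F.continuous
    exact (closure_minimal h1 h2).trans (Set.preimage_mono (hpsub i))
  apply isDoldSpace_of_cover V
  · refine ⟨q, ⟨fun i => (hpc i).comp F.continuous, fun i x => hpm i (F x),
      fun x => hps (F x)⟩, ?_, hqsub⟩
    -- local finiteness
    intro x
    obtain ⟨N, hN, hfinN⟩ := hplf (F x)
    refine ⟨F ⁻¹' N, F.continuous.continuousAt.preimage_mem_nhds hN, ?_⟩
    apply hfinN.subset
    intro i hi
    obtain ⟨y, hy1, hy2⟩ := hi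
    have h1 : Function.support (q i) ⊆ F ⁻¹' closure (Function.support (p i)) := by
      intro z hz
      exact subset_closure (by simpa [hq, Function.mem_support] using hz)
    have h2 : IsClosed (F ⁻¹' closure (Function.support (p i))) :=
      (isClosed_closure).preimage F.continuous
    have := closure_minimal h1 h2 hy1
    exact ⟨F y, this, hy2⟩
  · -- contractibility of V i
    intro i
    obtain ⟨y₀, hK⟩ := hUc i
    refine ⟨G y₀, ?_⟩
    set incV : C(V i, X) := ⟨Subtype.val, continuous_subtype_val⟩
    set incU : C(U i, Y) := ⟨Subtype.val, continuous_subtype_val⟩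
    set r : C(V i, U i) := ⟨fun v => ⟨F v.1, v.2⟩, by
      apply Continuous.subtype_mk
      exact F.continuous.comp continuous_subtype_val⟩
    have e1 : incV.Homotopic ((G.comp F).comp incV) := by
      have := ContinuousMap.Homotopic.comp H.symm (ContinuousMap.Homotopic.refl incV)
      simpa using this
    have e2 : (G.comp F).comp incV = G.comp (incU.comp r) := by
      ext v; rfl
    have e3 : (G.comp (incU.comp r)).Homotopic
        (G.comp ((ContinuousMap.const ↥(U i) y₀).comp r)) := by
      exact ContinuousMap.Homotopic.comp
        (ContinuousMap.Homotopic.refl G)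
        (ContinuousMap.Homotopic.comp hK (ContinuousMap.Homotopic.refl r))
    have e4 : G.comp ((ContinuousMap.const ↥(U i) y₀).comp r)
        = ContinuousMap.const ↥(V i) (G y₀) := by
      ext v; rfl
    calc incV.Homotopic _ := e1.trans (e2 ▸ (e3.trans (e4 ▸ ContinuousMap.Homotopic.refl _)))

/-- being a Dold space is a homotopy invariant. -/
theorem stmt8 {X : Type u} {Y : Type v} [TopologicalSpace X] [TopologicalSpace Y]
    (h : Nonempty (ContinuousMap.HomotopyEquiv X Y)) :
    IsDoldSpace X ↔ IsDoldSpace Y := by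
  obtain ⟨e⟩ := h
  constructor
  · intro hX
    exact isDoldSpace_transfer e.invFun e.toFun e.right_inv hX
  · intro hY
    exact isDoldSpace_transfer e.toFun e.invFun e.left_inv hY
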